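/- arXiv:1701.07529 — 2 statements merged into one kernel-verified Lean document; each statement's English description precedes it below -/
import Mathlib

section
/- Let K be the N×N cyclic shift matrix and 𝒦(ν̃) the real-parameter shift operator (𝒦(s+ν) = K^s((1−ν)I + νK) for s = ⌊ν̃⌋). Let Å ∈ ℝ^{N×M}. If φ ∈ ℝ^M is an eigenvector of Å^T Å with eigenvalue λ, then φ is an eigenvector of (𝒦(ν̃)Å)^T(𝒦(ν̃)Å) with eigenvalue λ plus a perturbation term: (𝒦(ν̃)Å)^T(𝒦(ν̃)Å)φ = λφ + ν(1−ν)·Å^T(K + K^T − 2I)Å φ, where ν is the fractional part of ν̃. -/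
open Matrix BigOperators

def cyc (N : ℕ) : Matrix (Fin N) (Fin N) ℝ :=
  fun i j => if ((j : ℕ) + 1) % N = (i : ℕ) then 1 else 0

lemma mod_inj {N : ℕ} (i j : Fin N) (h : ((i:ℕ)+1) % N = ((j:ℕ)+1) % N) : i = j := by
  have hi := i.isLt
  have hj := j.isLt
  apply Fin.ext
  rcases Nat.lt_or_ge ((i:ℕ)+1) N with h1 | h1
  · rw [Nat.mod_eq_of_lt h1] at h
    rcases Nat.lt_or_ge ((j:ℕ)+1) N with h2 | h2
    · rw [Nat.mod_eq_of_lt h2] at h; omega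
    · have : (j:ℕ)+1 = N := by omega
      rw [this, Nat.mod_self] at h; omega
  · have : (i:ℕ)+1 = N := by omega
    rw [this, Nat.mod_self] at h
    rcases Nat.lt_or_ge ((j:ℕ)+1) N with h2 | h2
    · rw [Nat.mod_eq_of_lt h2] at h; omega
    · omega

lemma cyc_t_mul (N : ℕ) : (cyc N)ᵀ * cyc N = 1 := by
  ext i j
  have hN : 0 < N := i.pos
  simp only [Matrix.mul_apply, transpose_apply, cyc, Matrix.one_apply]
  rw [Finset.sum_eq_single (⟨((i:ℕ)+1) % N, Nat.mod_lt _ hN⟩ : Fin N)]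
  · by_cases hij : i = j
    · simp [hij]
    · have : ¬ ((j:ℕ)+1) % N = ((i:ℕ)+1) % N := fun hc => hij (mod_inj i j hc.symm)
      simp [this, hij]
  · intro k _ hk
    have : ¬ ((i:ℕ)+1) % N = (k:ℕ) := by
      intro hc; exact hk (Fin.ext hc.symm)
    simp [this]
  · intro hk; exact absurd (Finset.mem_univ _) hk

lemma cyc_mul_t (N : ℕ) : cyc N * (cyc N)ᵀ = 1 :=
  mul_eq_one_comm.mp (cyc_t_mul N)

lemma cyc_t_pow_mul (N : ℕ) (m : ℕ) : ((cyc N)ᵀ)^m * (cyc N)^m = 1 := by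
  induction m with
  | zero => simp
  | succ m ih =>
    rw [pow_succ, pow_succ']
    calc ((cyc N)ᵀ)^m * (cyc N)ᵀ * ((cyc N) * (cyc N)^m)
        = ((cyc N)ᵀ)^m * ((cyc N)ᵀ * (cyc N)) * (cyc N)^m := by
          simp [Matrix.mul_assoc]
      _ = 1 := by rw [cyc_t_mul]; simpa using ih

lemma cyc_pow_mul_t (N : ℕ) (m : ℕ) : (cyc N)^m * ((cyc N)ᵀ)^m = 1 := by
  induction m with
  | zero => simp
  | succ m ih =>
    rw [pow_succ, pow_succ']
    calc (cyc N)^m * (cyc N) * ((cyc N)ᵀ * ((cyc N)ᵀ)^m)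
        = (cyc N)^m * ((cyc N) * (cyc N)ᵀ) * ((cyc N)ᵀ)^m := by
          simp [Matrix.mul_assoc]
      _ = 1 := by rw [cyc_mul_t]; simpa using ih

noncomputable def Kmat (N : ℕ) (ν : ℝ) : Matrix (Fin N) (Fin N) ℝ :=
  (1 - ν) • (1 : Matrix (Fin N) (Fin N) ℝ) + ν • cyc N

lemma Kmat_gram (N : ℕ) (ν : ℝ) :
    (Kmat N ν)ᵀ * Kmat N ν = 1 + (ν * (1 - ν)) • (cyc N + (cyc N)ᵀ - 2) := by
  have h2 : (2 : Matrix (Fin N) (Fin N) ℝ) = (2:ℝ) • 1 := by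
    rw [two_smul]; norm_num
  simp only [Kmat, transpose_add, transpose_smul, transpose_one]
  rw [Matrix.add_mul, Matrix.mul_add, Matrix.mul_add]
  simp only [Matrix.smul_mul, Matrix.mul_smul, Matrix.one_mul, Matrix.mul_one,
    cyc_t_mul, smul_smul]
  rw [h2]
  ext i j
  simp only [Matrix.add_apply, Matrix.sub_apply, Matrix.smul_apply, smul_eq_mul]
  ring

noncomputable def Kt (N : ℕ) (x : ℝ) : Matrix (Fin N) (Fin N) ℝ :=
  if 0 ≤ ⌊x⌋ then (cyc N) ^ (⌊x⌋).toNat * Kmat N (Int.fract x)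
  else ((cyc N)ᵀ) ^ (-⌊x⌋).toNat * Kmat N (Int.fract x)

lemma Kt_gram (N : ℕ) (x : ℝ) :
    (Kt N x)ᵀ * Kt N x
      = 1 + (Int.fract x * (1 - Int.fract x)) • (cyc N + (cyc N)ᵀ - 2) := by
  rw [Kt]
  split_ifs with hs
  · rw [transpose_mul, transpose_pow, Matrix.mul_assoc,
      ← Matrix.mul_assoc (((cyc N)ᵀ)^(⌊x⌋).toNat), cyc_t_pow_mul,
      Matrix.one_mul, Kmat_gram]
  · rw [transpose_mul, transpose_pow, transpose_transpose, Matrix.mul_assoc,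
      ← Matrix.mul_assoc ((cyc N)^(-⌊x⌋).toNat), cyc_pow_mul_t,
      Matrix.one_mul, Kmat_gram]

theorem shifted_gram_eigenvector (N M : ℕ) (x : ℝ)
    (A : Matrix (Fin N) (Fin M) ℝ) (φ : Fin M → ℝ) (lam : ℝ)
    (h : (Aᵀ * A) *ᵥ φ = lam • φ) :
    ((Kt N x * A)ᵀ * (Kt N x * A)) *ᵥ φ
      = lam • φ + (Int.fract x * (1 - Int.fract x)) •
          ((Aᵀ * (cyc N + (cyc N)ᵀ - 2) * A) *ᵥ φ) := by
  have e : (Kt N x * A)ᵀ * (Kt N x * A)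
      = Aᵀ * A + (Int.fract x * (1 - Int.fract x)) •
          (Aᵀ * (cyc N + (cyc N)ᵀ - 2) * A) := by
    rw [transpose_mul, Matrix.mul_assoc, ← Matrix.mul_assoc (Kt N x)ᵀ, Kt_gram,
      Matrix.add_mul, Matrix.one_mul, Matrix.mul_add, Matrix.smul_mul,
      Matrix.mul_smul, Matrix.mul_assoc]
  rw [e, Matrix.add_mulVec, h, Matrix.smul_mulVec]
end

section
/- Let K be the N×N cyclic shift matrix and suppose a ∈ ℝ^N has cyclic period L (i.e., L is the smallest positive integer with K^L a = a). If a is non-constant, b ∈ ℝ^N, and g(ν̃) = b − 𝒦(ν̃)^T a, then g is periodic with period L: g(ν̃ + L) = g(ν̃) for all ν̃ ∈ ℝ, and no smaller positive period exists. -/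
open Matrix BigOperators

section Aux
variable {N : ℕ}

lemma succ_mod_inj (hN : 0 < N) {i j : ℕ} (hi : i < N) (hj : j < N)
    (h : (i+1) % N = (j+1) % N) : i = j := by
  rcases Nat.lt_or_ge (i+1) N with h1 | h1 <;> rcases Nat.lt_or_ge (j+1) N with h2 | h2
  · rw [Nat.mod_eq_of_lt h1, Nat.mod_eq_of_lt h2] at h; omega
  · have hj1 : j + 1 = N := by omega
    rw [Nat.mod_eq_of_lt h1, hj1, Nat.mod_self] at h; omega
  · have hi1 : i + 1 = N := by omega
    rw [hi1, Nat.mod_self, Nat.mod_eq_of_lt h2] at h; omega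
  · omega

lemma cycT_mulVec (hN : 0 < N) (v : Fin N → ℝ) (i : Fin N) :
    ((cyc N)ᵀ *ᵥ v) i = v ⟨((i : ℕ)+1) % N, Nat.mod_lt _ hN⟩ := by
  simp only [Matrix.mulVec, dotProduct, Matrix.transpose_apply, cyc]
  rw [Finset.sum_eq_single (⟨((i : ℕ)+1) % N, Nat.mod_lt _ hN⟩ : Fin N)]
  · simp
  · intro j _ hj
    rw [if_neg, zero_mul]
    intro h; exact hj (Fin.ext h.symm)
  · intro h; exact absurd (Finset.mem_univ _) h

lemma cycT_mul_cyc (hN : 0 < N) : (cyc N)ᵀ * cyc N = 1 := by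
  ext i j
  simp only [Matrix.mul_apply, Matrix.transpose_apply, cyc, Matrix.one_apply]
  rw [Finset.sum_eq_single (⟨((i : ℕ)+1) % N, Nat.mod_lt _ hN⟩ : Fin N)]
  · rw [if_pos rfl, one_mul]
    by_cases h : i = j
    · subst h; simp
    · rw [if_neg, if_neg h]
      intro hc
      exact h (Fin.ext (succ_mod_inj hN j.2 i.2 hc)).symm
  · intro k _ hk
    rw [if_neg, zero_mul]
    intro h; exact hk (Fin.ext h.symm)
  · intro h; exact absurd (Finset.mem_univ _) h

lemma cyc_mul_cycT (hN : 0 < N) : cyc N * (cyc N)ᵀ = 1 :=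
  mul_eq_one_comm.mp (cycT_mul_cyc hN)

lemma cycTk_mul_cyck (hN : 0 < N) (k : ℕ) : ((cyc N)ᵀ) ^ k * (cyc N) ^ k = 1 := by
  induction k with
  | zero => simp
  | succ n ih =>
    rw [pow_succ, pow_succ', mul_assoc, ← mul_assoc ((cyc N)ᵀ), cycT_mul_cyc hN, one_mul, ih]

lemma cyck_mul_cycTk (hN : 0 < N) (k : ℕ) : (cyc N) ^ k * ((cyc N)ᵀ) ^ k = 1 := by
  induction k with
  | zero => simp
  | succ n ih =>
    rw [pow_succ, pow_succ', mul_assoc, ← mul_assoc (cyc N), cyc_mul_cycT hN, one_mul, ih]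

lemma Tk_Ck_vec (hN : 0 < N) (k : ℕ) (v : Fin N → ℝ) :
    ((cyc N)ᵀ) ^ k *ᵥ ((cyc N) ^ k *ᵥ v) = v := by
  rw [Matrix.mulVec_mulVec, cycTk_mul_cyck hN, Matrix.one_mulVec]

lemma Ck_Tk_vec (hN : 0 < N) (k : ℕ) (v : Fin N → ℝ) :
    (cyc N) ^ k *ᵥ (((cyc N)ᵀ) ^ k *ᵥ v) = v := by
  rw [Matrix.mulVec_mulVec, cyck_mul_cycTk hN, Matrix.one_mulVec]

lemma Kt_vec (x : ℝ) (a : Fin N → ℝ) :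
    (Kt N x)ᵀ *ᵥ a = (Kmat N (Int.fract x))ᵀ *ᵥ
      (if 0 ≤ ⌊x⌋ then ((cyc N)ᵀ) ^ (⌊x⌋).toNat *ᵥ a else (cyc N) ^ (-⌊x⌋).toNat *ᵥ a) := by
  unfold Kt
  split_ifs with h
  · rw [Matrix.transpose_mul, ← Matrix.mulVec_mulVec, Matrix.transpose_pow]
  · rw [Matrix.transpose_mul, ← Matrix.mulVec_mulVec, Matrix.transpose_pow,
      Matrix.transpose_transpose]

end Aux

theorem template_mismatch_period (N L : ℕ) (a b : Fin N → ℝ)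
    (hL : 0 < L) (hper : (cyc N) ^ L *ᵥ a = a)
    (hmin : ∀ L' : ℕ, 0 < L' → L' < L → (cyc N) ^ L' *ᵥ a ≠ a)
    (ha : ¬ ∃ c : ℝ, ∀ i, a i = c) :
    (∀ x : ℝ, b - (Kt N (x + L))ᵀ *ᵥ a = b - (Kt N x)ᵀ *ᵥ a) ∧
    (∀ P : ℝ, 0 < P →
      (∀ x : ℝ, b - (Kt N (x + P))ᵀ *ᵥ a = b - (Kt N x)ᵀ *ᵥ a) → (L : ℝ) ≤ P) := by
  have hN : 0 < N := by
    by_contra h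
    push_neg at h
    exact ha ⟨0, fun i => absurd i.isLt (by omega)⟩
  have hTL : ((cyc N)ᵀ) ^ L *ᵥ a = a := by
    conv_lhs => rw [← hper]
    exact Tk_Ck_vec hN L a
  have hC_add : ∀ k : ℕ, (cyc N) ^ (k + L) *ᵥ a = (cyc N) ^ k *ᵥ a := by
    intro k; rw [pow_add, ← Matrix.mulVec_mulVec, hper]
  have hT_add : ∀ k : ℕ, ((cyc N)ᵀ) ^ (k + L) *ᵥ a = ((cyc N)ᵀ) ^ k *ᵥ a := by
    intro k; rw [pow_add, ← Matrix.mulVec_mulVec, hTL]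
  have hshift : ∀ n : ℤ,
      (if 0 ≤ n + (L:ℤ) then ((cyc N)ᵀ) ^ (n + (L:ℤ)).toNat *ᵥ a
        else (cyc N) ^ (-(n + (L:ℤ))).toNat *ᵥ a) =
      (if 0 ≤ n then ((cyc N)ᵀ) ^ n.toNat *ᵥ a else (cyc N) ^ (-n).toNat *ᵥ a) := by
    intro n
    by_cases h1 : 0 ≤ n
    · rw [if_pos (by omega), if_pos h1]
      have : (n + (L:ℤ)).toNat = n.toNat + L := by omega
      rw [this, hT_add]
    · rw [if_neg h1]
      by_cases h2 : 0 ≤ n + (L:ℤ)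
      · rw [if_pos h2]
        set k := (n + (L:ℤ)).toNat
        set m := (-n).toNat
        have hmk : m + k = L := by omega
        calc ((cyc N)ᵀ) ^ k *ᵥ a
            = (cyc N) ^ m *ᵥ (((cyc N)ᵀ) ^ m *ᵥ (((cyc N)ᵀ) ^ k *ᵥ a)) :=
              (Ck_Tk_vec hN m _).symm
          _ = (cyc N) ^ m *ᵥ (((cyc N)ᵀ) ^ (m + k) *ᵥ a) := by
              conv_rhs => rw [pow_add, ← Matrix.mulVec_mulVec]
          _ = (cyc N) ^ m *ᵥ a := by rw [hmk, hTL]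
      · rw [if_neg h2]
        have : (-n).toNat = (-(n + (L:ℤ))).toNat + L := by omega
        rw [this, hC_add]
  constructor
  · intro x
    congr 1
    rw [Kt_vec, Kt_vec]
    have hfl : ⌊x + (L:ℝ)⌋ = ⌊x⌋ + (L:ℤ) := by
      rw [show ((L:ℕ):ℝ) = ((L:ℤ):ℝ) by push_cast; ring, Int.floor_add_intCast]
    have hfr : Int.fract (x + (L:ℝ)) = Int.fract x := by
      rw [show ((L:ℕ):ℝ) = ((L:ℤ):ℝ) by push_cast; ring, Int.fract_add_intCast]
    rw [hfl, hfr, hshift]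
  · intro P hP hPper
    have hKP : (Kt N P)ᵀ *ᵥ a = (Kt N 0)ᵀ *ᵥ a := by
      have := hPper 0
      rw [zero_add, sub_right_inj] at this
      exact this
    have hKt0 : (Kt N 0)ᵀ *ᵥ a = a := by
      unfold Kt Kmat
      norm_num
    rw [hKt0] at hKP
    have hflP : 0 ≤ ⌊P⌋ := Int.floor_nonneg.mpr hP.le
    rw [Kt_vec, if_pos hflP] at hKP
    set n := (⌊P⌋).toNat with hn
    set w := ((cyc N)ᵀ) ^ n *ᵥ a with hwdef
    set ν := Int.fract P with hν
    have hν0 : 0 ≤ ν := Int.fract_nonneg P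
    have hν1 : ν < 1 := Int.fract_lt_one P
    by_cases hz : ν = 0
    · -- P is a positive integer
      have hPfl : P = (⌊P⌋ : ℝ) := by
        have h3 : ν = P - ⌊P⌋ := rfl
        rw [hz] at h3; linarith
      have hKm1 : Kmat N ν = 1 := by rw [hz]; simp [Kmat]
      rw [hKm1, Matrix.transpose_one, Matrix.one_mulVec] at hKP
      -- hKP : w = a, i.e. T^n a = a
      have hCn : (cyc N) ^ n *ᵥ a = a := by
        conv_lhs => rw [← hKP]
        exact Ck_Tk_vec hN n a
      have hn1 : 0 < n := by
        rcases Nat.eq_zero_or_pos n with h0 | h0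
        · exfalso
          have hfl0 : ⌊P⌋ = 0 := by omega
          have : (⌊P⌋ : ℝ) = 0 := by exact_mod_cast hfl0
          rw [this] at hPfl; linarith
        · exact h0
      have hLn : L ≤ n := by
        by_contra h
        push_neg at h
        exact hmin n hn1 h hCn
      calc (L:ℝ) ≤ (n:ℝ) := by exact_mod_cast hLn
        _ = (⌊P⌋ : ℝ) := by rw [hn]; exact_mod_cast Int.toNat_of_nonneg hflP
        _ ≤ P := Int.floor_le P
    · -- 0 < ν < 1 : contradiction via strict sum-of-squares decrease
      exfalso
      have hν0' : 0 < ν := lt_of_le_of_ne hν0 (Ne.symm hz)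
      -- w is non-constant
      have hCw : (cyc N) ^ n *ᵥ w = a := Ck_Tk_vec hN n a
      have hconst : ∀ c : ℝ, (cyc N) ^ n *ᵥ (fun _ => c) = (fun _ => c) := by
        intro c
        induction n with
        | zero => simp
        | succ m ih =>
          have hTc : (cyc N)ᵀ *ᵥ (fun _ => c) = (fun _ => c) := by
            funext i; rw [cycT_mulVec hN]
          have hCc : (cyc N) *ᵥ (fun _ => c) = (fun _ => c) := by
            conv_lhs => rw [← hTc]
            have := Ck_Tk_vec hN 1 (fun _ => c)
            simpa using this
          rw [pow_succ', ← Matrix.mulVec_mulVec, ih, hCc]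
      have hwnc : ¬ ∃ c : ℝ, ∀ i, w i = c := by
        rintro ⟨c, hc⟩
        apply ha
        refine ⟨c, fun i => ?_⟩
        have : w = (fun _ => c) := funext hc
        rw [this, hconst] at hCw
        exact congrFun hCw.symm i
      -- neighbor difference
      have hnb : ∃ i : Fin N, w i ≠ w ⟨((i : ℕ)+1) % N, Nat.mod_lt _ hN⟩ := by
        by_contra h
        push_neg at h
        apply hwnc
        refine ⟨w ⟨0, hN⟩, ?_⟩
        have H : ∀ k (hk : k < N), w ⟨k, hk⟩ = w ⟨0, hN⟩ := by
          intro k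
          induction k with
          | zero => intro hk; rfl
          | succ m ih =>
            intro hk
            have hm : m < N := by omega
            have h2 := h ⟨m, hm⟩
            have he : (⟨((m : ℕ)+1) % N, Nat.mod_lt _ hN⟩ : Fin N) = ⟨m+1, hk⟩ :=
              Fin.ext (Nat.mod_eq_of_lt hk)
            rw [he] at h2
            exact h2.symm.trans (ih hm)
        intro i
        have := H i.1 i.2
        simpa using this
      -- sum of squares invariance under T
      have hsft : Function.Injective (fun i : Fin N => (⟨((i : ℕ)+1) % N, Nat.mod_lt _ hN⟩ : Fin N)) := by
        intro i j hij
        exact Fin.ext (succ_mod_inj hN i.2 j.2 (congrArg Fin.val hij))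
      have hsbij := Finite.injective_iff_bijective.mp hsft
      have hsum_shift : ∀ v : Fin N → ℝ,
          ∑ i : Fin N, v (⟨((i : ℕ)+1) % N, Nat.mod_lt _ hN⟩ : Fin N) ^ 2 = ∑ i : Fin N, v i ^ 2 := by
        intro v
        exact Fintype.sum_bijective _ hsbij _ _ (fun i => rfl)
      have hST : ∀ v : Fin N → ℝ, ∑ i : Fin N, ((cyc N)ᵀ *ᵥ v) i ^ 2 = ∑ i : Fin N, v i ^ 2 := by
        intro v
        calc ∑ i : Fin N, ((cyc N)ᵀ *ᵥ v) i ^ 2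
            = ∑ i : Fin N, v (⟨((i : ℕ)+1) % N, Nat.mod_lt _ hN⟩ : Fin N) ^ 2 := by
              refine Finset.sum_congr rfl fun i _ => ?_
              rw [cycT_mulVec hN]
          _ = ∑ i : Fin N, v i ^ 2 := hsum_shift v
      have hSw : ∑ i : Fin N, w i ^ 2 = ∑ i : Fin N, a i ^ 2 := by
        rw [hwdef]
        clear_value w
        clear hwdef hwnc hnb hCw
        induction n with
        | zero => simp
        | succ m ih =>
          rw [pow_succ', ← Matrix.mulVec_mulVec, hST, ih]
      -- apply of Kmatᵀ
      have happ : ∀ i, ((Kmat N ν)ᵀ *ᵥ w) i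
          = (1-ν) * w i + ν * w (⟨((i : ℕ)+1) % N, Nat.mod_lt _ hN⟩ : Fin N) := by
        intro i
        have : (Kmat N ν)ᵀ = (1-ν) • (1 : Matrix (Fin N) (Fin N) ℝ) + ν • (cyc N)ᵀ := by
          rw [Kmat, Matrix.transpose_add, Matrix.transpose_smul, Matrix.transpose_smul,
            Matrix.transpose_one]
        rw [this, Matrix.add_mulVec, Matrix.smul_mulVec, Matrix.smul_mulVec,
          Matrix.one_mulVec]
        simp only [Pi.add_apply, Pi.smul_apply, smul_eq_mul]
        rw [cycT_mulVec hN]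
      -- strict decrease
      obtain ⟨i₀, hi₀⟩ := hnb
      have hQpos : 0 < ∑ i : Fin N, (w i - w (⟨((i : ℕ)+1) % N, Nat.mod_lt _ hN⟩ : Fin N)) ^ 2 := by
        apply Finset.sum_pos' (fun i _ => sq_nonneg _)
        exact ⟨i₀, Finset.mem_univ _, lt_of_le_of_ne (sq_nonneg _)
          (Ne.symm (pow_ne_zero 2 (sub_ne_zero.mpr hi₀)))⟩
      have hdecomp : ∑ i : Fin N, ((Kmat N ν)ᵀ *ᵥ w) i ^ 2
          = ∑ i : Fin N, w i ^ 2 - ν * (1-ν) *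
            ∑ i : Fin N, (w i - w (⟨((i : ℕ)+1) % N, Nat.mod_lt _ hN⟩ : Fin N)) ^ 2 := by
        have step : ∀ i, ((Kmat N ν)ᵀ *ᵥ w) i ^ 2
            = (1-ν) * w i ^ 2 + ν * w (⟨((i : ℕ)+1) % N, Nat.mod_lt _ hN⟩ : Fin N) ^ 2
              - ν * (1-ν) * (w i - w (⟨((i : ℕ)+1) % N, Nat.mod_lt _ hN⟩ : Fin N)) ^ 2 := by
          intro i; rw [happ i]; ring
        rw [Finset.sum_congr rfl (fun i _ => step i), Finset.sum_sub_distrib,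
          Finset.sum_add_distrib, ← Finset.mul_sum, ← Finset.mul_sum, ← Finset.mul_sum,
          hsum_shift w]
        ring
      have hlt : ∑ i : Fin N, ((Kmat N ν)ᵀ *ᵥ w) i ^ 2 < ∑ i : Fin N, w i ^ 2 := by
        rw [hdecomp]
        have : 0 < ν * (1-ν) * ∑ i : Fin N, (w i - w (⟨((i : ℕ)+1) % N, Nat.mod_lt _ hN⟩ : Fin N)) ^ 2 :=
          mul_pos (mul_pos hν0' (by linarith)) hQpos
        linarith
      rw [hKP, hSw] at hlt
      exact lt_irrefl _ hlt
end
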